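/- Let M = (m_1,...,m_k) be a tuple of positive integers with m_k ≥ 2, and let N = (n_1,...,n_u) be any list of integers with |n_j| ≥ 2 for every j such that cf(N) = cf(M). Then there exists an allowable sub-tuple I for M with N = M_I. -/

import Mathlib

/-- Continued fraction value of a list of rationals:
`cf [n₁,...,n_k] = 1/(n₁ + 1/(n₂ + ... + 1/n_k))`. -/
def cf : List ℚ → ℚ
  | [] => 0
  | n :: L => 1 / (n + cf L)

/-- The alternating sequence `-2, 2, -2, 2, ..., ±2` of length `n`. -/
def altSeq (n : ℕ) : List ℤ :=
  (List.range n).map (fun j => (-1 : ℤ) ^ (j + 1) * 2)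

/-- The `i`-th entry (1-based) of the tuple `M`. -/
def ent (M : List ℕ) (i : ℕ) : ℕ := M.getD (i - 1) 0

/-- `I` is an allowable sub-tuple for the tuple `M` of positive integers:
a strictly increasing tuple of indices in `{1,...,k}` with consecutive
gaps at least 2, such that for every index `i` with `m_i = 1` at least
one of `i-1, i, i+1` belongs to `I`. -/
def IsAllowable (M : List ℕ) (I : List ℕ) : Prop :=
  I.Chain' (fun a b => a + 2 ≤ b) ∧
  (∀ i ∈ I, 1 ≤ i ∧ i ≤ M.length) ∧
  (∀ i, 1 ≤ i → i ≤ M.length → ent M i = 1 → (i - 1 ∈ I ∨ i ∈ I ∨ i + 1 ∈ I))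

/-- The sign `∏_{i' ∈ I, i' < i} (-1)^(m_{i'})` adjusting the entries coming
from position `i` of `M`. -/
def subSign (M : List ℕ) (I : List ℕ) (i : ℕ) : ℤ :=
  ((I.filter (fun i' => decide (i' < i))).map (fun i' => (-1 : ℤ) ^ ent M i')).prod

/-- Before sign adjustment, the block of entries of `M_I` coming from position `i`
of `M`: either the alternating sequence `-2,2,...,±2` of length `m_i - 1`
(if `i ∈ I`), or the single entry `m_i` increased by 1 for each neighbor of `i`
lying in `I`. -/
def block (M : List ℕ) (I : List ℕ) (i : ℕ) : List ℤ :=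
  if i ∈ I then altSeq (ent M i - 1)
  else [(ent M i : ℤ) + (if i - 1 ∈ I then 1 else 0) + (if i + 1 ∈ I then 1 else 0)]

/-- The continued fraction expansion `M_I` associated to an allowable sub-tuple `I`
of `M`. -/
def MI (M : List ℕ) (I : List ℕ) : List ℤ :=
  ((List.range M.length).map (fun idx =>
    (block M I (idx + 1)).map (fun q => subSign M I (idx + 1) * q))).flatten

/-- `n⁺(N) = #{i : (-1)^(i+1) n_i > 0}` (1-based `i`). -/
def nplus (N : List ℤ) : ℕ :=
  ((List.range N.length).filter
    (fun idx => decide (0 < (-1 : ℤ) ^ idx * N.getD idx 0))).length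

/-- `n⁻(N) = #{i : (-1)^(i+1) n_i < 0}` (1-based `i`). -/
def nminus (N : List ℤ) : ℕ :=
  ((List.range N.length).filter
    (fun idx => decide ((-1 : ℤ) ^ idx * N.getD idx 0 < 0))).length

/-- `Σ_{i ∈ I} (-1)^i m_i`. -/
def sgnSum (M : List ℕ) (I : List ℕ) : ℤ :=
  (I.map (fun i => (-1 : ℤ) ^ i * (ent M i : ℤ))).sum

/-- The dual sub-tuple `(k+1-i_j, ..., k+1-i_1)` of `I = (i_1,...,i_j)`. -/
def dualSub (k : ℕ) (I : List ℕ) : List ℕ :=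
  (I.map (fun i => k + 1 - i)).reverse

/-- `(m_1,...,m_k)` is super-increasing if `m_i > Σ_{j<i} m_j` for all `i`. -/
def SuperInc (M : List ℕ) : Prop :=
  ∀ i, 1 ≤ i → i ≤ M.length → (M.take (i - 1)).sum < ent M i

theorem cf_nil : cf [] = 0 := rfl
theorem cf_cons (n : ℚ) (L : List ℚ) : cf (n :: L) = 1 / (n + cf L) := rfl

theorem castList_eqZ (N : List ℤ) : N.map (fun n => (n:ℚ)) = N.map Int.cast := by
  induction N with
  | nil => rfl
  | cons a l ih => simp_all
theorem castList_eqN (M : List ℕ) : M.map (fun m => (m:ℚ)) = M.map Nat.cast := by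
  induction M with
  | nil => rfl
  | cons a l ih => simp_all

/-- absolute value of cf of an integer list with entries ≥ 2 in abs -/
theorem cf_abs_lt (N : List ℤ) (h : ∀ q ∈ N, 2 ≤ |q|) :
    |cf (N.map Int.cast)| < 1 := by
  induction N with
  | nil => simp [cf]
  | cons n N ih =>
    have h2 : (2:ℚ) ≤ |(n:ℚ)| := by
      have := h n (List.mem_cons_self); exact_mod_cast this
    have hr := ih (fun q hq => h q (List.mem_cons_of_mem _ hq))
    set r := cf (N.map Int.cast) with hrdef
    have hd : 1 < |(n:ℚ) + r| := by
      have h1 : |(n:ℚ)| - |r| ≤ |(n:ℚ) + r| := by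
        have := abs_add_le ((n:ℚ) + r) (-r)
        simp at this; linarith
      linarith
    rw [List.map_cons, cf_cons, ← hrdef, abs_div, abs_one]
    rw [div_lt_one (by linarith)]
    linarith

theorem cf_denom_ne (n : ℤ) (hn : 2 ≤ |n|) (r : ℚ) (hr : |r| < 1) :
    (n:ℚ) + r ≠ 0 := by
  have h2 : (2:ℚ) ≤ |(n:ℚ)| := by exact_mod_cast hn
  intro h
  have hr' : r = -(n:ℚ) := by linarith
  rw [hr', abs_neg] at hr
  linarith

theorem cf_cons_ne (n : ℤ) (N : List ℤ) (h : ∀ q ∈ n::N, 2 ≤ |q|) :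
    cf ((n::N).map Int.cast) ≠ 0 := by
  rw [List.map_cons, cf_cons]
  have hr := cf_abs_lt N (fun q hq => h q (List.mem_cons_of_mem _ hq))
  exact one_div_ne_zero (cf_denom_ne n (h n (List.mem_cons_self)) _ hr)

/-- cf of a positive tuple with last entry ≥ 2 lies in (0,1). -/
theorem cf_M_bounds (M : List ℕ) (hne : M ≠ []) (hpos : ∀ m ∈ M, 0 < m)
    (hlast : 2 ≤ M.getLastD 0) :
    0 < cf (M.map Nat.cast) ∧ cf (M.map Nat.cast) < 1 := by
  induction M with
  | nil => exact absurd rfl hne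
  | cons m M ih =>
    rw [List.map_cons, cf_cons]
    rcases eq_or_ne M [] with rfl | hM
    · have hm : 2 ≤ m := by simpa using hlast
      have hm' : (2:ℚ) ≤ (m:ℚ) := by exact_mod_cast hm
      rw [show (List.map (Nat.cast : ℕ → ℚ) [] : List ℚ) = [] from rfl, cf_nil, add_zero]
      constructor
      · positivity
      · rw [div_lt_one (by positivity)]; linarith
    · have hlast' : 2 ≤ M.getLastD 0 := by
        rw [List.getLastD_cons] at hlast
        have hg : M.getLast? = some (M.getLast hM) := List.getLast?_eq_getLast hM
        rw [List.getLastD_eq_getLast?] at hlast ⊢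
        rw [hg] at hlast ⊢
        simpa using hlast
      obtain ⟨h0, h1⟩ := ih hM (fun q hq => hpos q (List.mem_cons_of_mem _ hq)) hlast'
      have hm : 1 ≤ m := hpos m (List.mem_cons_self)
      have hm' : (1:ℚ) ≤ (m:ℚ) := by exact_mod_cast hm
      constructor
      · positivity
      · rw [div_lt_one (by positivity)]; linarith

theorem cf_neg_map (L : List ℚ) : cf (L.map (fun q => -q)) = - cf L := by
  induction L with
  | nil => simp [cf]
  | cons a l ih =>
    rw [List.map_cons, cf_cons, cf_cons, ih, ← neg_add, one_div, one_div, inv_neg]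


-- ent lemmas
theorem ent_cons_one (m : ℕ) (M : List ℕ) : ent (m::M) 1 = m := rfl
theorem ent_cons_succ (m : ℕ) (M : List ℕ) (j : ℕ) : ent (m::M) (j+2) = ent M (j+1) := rfl
theorem ent_cons_succ' (m : ℕ) (M : List ℕ) (j : ℕ) (hj : 1 ≤ j) :
    ent (m::M) (j+1) = ent M j := by
  obtain ⟨j', rfl⟩ : ∃ j', j = j' + 1 := ⟨j - 1, by omega⟩
  rfl

-- altSeq lemmas
theorem altSeq_zero : altSeq 0 = [] := rfl
theorem altSeq_succ (n : ℕ) : altSeq (n+1) = -2 :: (altSeq n).map (fun x => -x) := by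
  unfold altSeq
  rw [List.range_succ_eq_map, List.map_cons, List.map_map, List.map_map]
  norm_num
  intro a _
  rw [pow_succ]
  ring

-- membership lemmas
theorem mem_map_succ (K : List ℕ) (x : ℕ) : x + 1 ∈ K.map (fun j => j+1) ↔ x ∈ K := by
  simp
theorem not_mem_map_succ_one (K : List ℕ) (hK : ∀ j ∈ K, 1 ≤ j) :
    1 ∉ K.map (fun j => j+1) := by
  simp only [List.mem_map]
  rintro ⟨j, hj, h⟩
  have := hK j hj; omega
theorem not_mem_map_succ_zero (K : List ℕ) : 0 ∉ K.map (fun j => j+1) := by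
  simp

-- subSign lemmas
theorem subSign_one (M : List ℕ) (I : List ℕ) (hK : ∀ j ∈ I, 1 ≤ j) : subSign M I 1 = 1 := by
  unfold subSign
  have : I.filter (fun i' => decide (i' < 1)) = I.filter (fun _ => false) := by
    apply List.filter_congr
    intro a ha
    have := hK a ha
    simp
    omega
  rw [this, List.filter_false]
  rfl

theorem subSign_map_succ (m : ℕ) (M₀ K : List ℕ) (hK : ∀ j ∈ K, 1 ≤ j) (i : ℕ) :
    subSign (m::M₀) (K.map (fun j => j+1)) (i+1) = subSign M₀ K i := by
  unfold subSign
  rw [List.filter_map, List.map_map]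
  have h1 : K.filter ((fun i' => decide (i' < i + 1)) ∘ (fun j => j+1))
      = K.filter (fun j => decide (j < i)) := by
    apply List.filter_congr
    intro a _
    simp [Function.comp]
  rw [h1]
  apply congrArg
  apply List.map_congr_left
  intro a ha
  have ha' : a ∈ K := List.mem_of_mem_filter ha
  have h1a : 1 ≤ a := hK a ha'
  simp only [Function.comp]
  rw [ent_cons_succ' m M₀ a h1a]

theorem subSign_ent_congr (M M' K : List ℕ) (i : ℕ) (h : ∀ j ∈ K, ent M j = ent M' j) :
    subSign M K i = subSign M' K i := by
  unfold subSign
  apply congrArg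
  apply List.map_congr_left
  intro a ha
  rw [h a (List.mem_of_mem_filter ha)]

theorem subSign_cons_one (M : List ℕ) (K : List ℕ) (i : ℕ) (hi : 1 < i) :
    subSign M (1::K) i = (-1 : ℤ) ^ ent M 1 * subSign M K i := by
  unfold subSign
  rw [List.filter_cons]
  have : decide (1 < i) = true := by simpa using hi
  simp only [this, if_pos, List.map_cons, List.prod_cons]

theorem MI_expand (m : ℕ) (M₀ I : List ℕ) :
    MI (m::M₀) I = (block (m::M₀) I 1).map (fun q => subSign (m::M₀) I 1 * q) ++
      ((List.range M₀.length).map (fun idx =>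
        (block (m::M₀) I (idx+2)).map (fun q => subSign (m::M₀) I (idx+2) * q))).flatten := by
  unfold MI
  rw [List.length_cons, List.range_succ_eq_map, List.map_cons, List.flatten_cons, List.map_map]
  rfl

theorem MI_nil (I : List ℕ) : MI [] I = [] := rfl

theorem MI_cons_shift (m : ℕ) (M₀ K : List ℕ) (hK : ∀ j ∈ K, 1 ≤ j) :
    MI (m::M₀) (K.map (fun j => j+1)) =
      ((m:ℤ) + if 1 ∈ K then 1 else 0) :: MI M₀ K := by
  rw [MI_expand]
  have hmem1 : (1:ℕ) ∉ K.map (fun j => j+1) := not_mem_map_succ_one K hK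
  have hmem0 : (0:ℕ) ∉ K.map (fun j => j+1) := not_mem_map_succ_zero K
  have h2 : ((2:ℕ) ∈ K.map (fun j => j+1)) ↔ 1 ∈ K := mem_map_succ K 1
  have hblock1 : block (m::M₀) (K.map (fun j => j+1)) 1
      = [(m:ℤ) + (if 1 ∈ K then 1 else 0)] := by
    unfold block
    rw [if_neg hmem1]
    simp only [show (1:ℕ)-1 = 0 from rfl, show (1:ℕ)+1 = 2 from rfl, if_neg hmem0,
      ent_cons_one, h2, add_zero]
  rw [hblock1, subSign_one _ _ (by intro j hj; rcases List.mem_map.mp hj with ⟨a, _, rfl⟩; omega)]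
  rw [List.map_cons, List.map_nil, one_mul, List.singleton_append]
  congr 1
  unfold MI
  apply congrArg
  apply List.map_congr_left
  intro idx _
  rw [subSign_map_succ m M₀ K hK (idx+1)]
  congr 1
  unfold block
  have e1 : ((idx+2:ℕ) ∈ K.map (fun j => j+1)) ↔ idx+1 ∈ K := mem_map_succ K (idx+1)
  have e2 : ((idx+1:ℕ) ∈ K.map (fun j => j+1)) ↔ idx ∈ K := mem_map_succ K idx
  have e3 : ((idx+3:ℕ) ∈ K.map (fun j => j+1)) ↔ idx+2 ∈ K := mem_map_succ K (idx+2)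
  simp only [show idx+2-1 = idx+1 from rfl, show idx+2+1 = idx+3 from rfl,
    show idx+1-1 = idx from rfl, e1, e2, e3, ent_cons_succ]

theorem map_one_mul (l : List ℤ) : l.map (fun q => (1:ℤ) * q) = l := by simp

theorem MI_peel (b : ℕ) (Mt K₀ : List ℕ) (hK₀ : ∀ j ∈ K₀, 3 ≤ j) :
    MI ((b+2)::Mt) (1::K₀) = -2 :: (MI ((b+1)::Mt) (1::K₀)).map (fun x => -x) := by
  have hone : ∀ j ∈ (1::K₀ : List ℕ), 1 ≤ j := by
    intro j hj
    rcases List.mem_cons.mp hj with rfl | h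
    · omega
    · have := hK₀ j h; omega
  rw [MI_expand, MI_expand, subSign_one _ _ hone, subSign_one _ _ hone]
  have hb1 : block ((b+2)::Mt) (1::K₀) 1 = altSeq (b+1) := by
    unfold block
    rw [if_pos (List.mem_cons_self), ent_cons_one]
    rfl
  have hb2 : block ((b+1)::Mt) (1::K₀) 1 = altSeq b := by
    unfold block
    rw [if_pos (List.mem_cons_self), ent_cons_one]
    rfl
  rw [hb1, hb2, altSeq_succ, map_one_mul, map_one_mul, List.map_append, List.cons_append,
    List.map_flatten]
  congr 1
  congr 1
  rw [List.map_map]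
  apply congrArg
  apply List.map_congr_left
  intro idx _
  -- signed block equality with sign flip
  have hblk : block ((b+2)::Mt) (1::K₀) (idx+2) = block ((b+1)::Mt) (1::K₀) (idx+2) := by
    unfold block
    rw [ent_cons_succ, ent_cons_succ]
  have hsub : subSign ((b+2)::Mt) (1::K₀) (idx+2)
      = - subSign ((b+1)::Mt) (1::K₀) (idx+2) := by
    have h12 : (1:ℕ) < idx+2 := by omega
    rw [subSign_cons_one _ _ _ h12, subSign_cons_one _ _ _ h12, ent_cons_one, ent_cons_one]
    rw [subSign_ent_congr ((b+2)::Mt) ((b+1)::Mt) K₀ (idx+2) (by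
      intro j hj
      obtain ⟨j', rfl⟩ : ∃ j', j = j' + 2 := ⟨j - 2, by have := hK₀ j hj; omega⟩
      rw [ent_cons_succ, ent_cons_succ])]
    rw [pow_succ]
    ring
  rw [hblk, hsub]
  simp only [Function.comp_apply]
  rw [List.map_map]
  apply List.map_congr_left
  intro a _
  simp

theorem MI_collapse (c : ℕ) (M₃ J : List ℕ) (hJ : ∀ j ∈ J, 2 ≤ j) :
    MI (1::c::M₃) (1 :: J.map (fun j => j+1)) = (MI ((c+1)::M₃) J).map (fun x => -x) := by
  have hJ1 : ∀ j ∈ J, 1 ≤ j := fun j hj => by have := hJ j hj; omega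
  have hmemK : ∀ x : ℕ, (x+2 ∈ (1 :: J.map (fun j => j+1))) ↔ x+1 ∈ J := by
    intro x
    rw [List.mem_cons]
    constructor
    · rintro (h | h)
      · omega
      · exact (mem_map_succ J (x+1)).mp h
    · intro h
      exact Or.inr ((mem_map_succ J (x+1)).mpr h)
  have h1K : (1:ℕ) ∈ (1 :: J.map (fun j => j+1)) := List.mem_cons_self
  rw [MI_expand]
  have hb1 : block (1::c::M₃) (1 :: J.map (fun j => j+1)) 1 = [] := by
    unfold block
    rw [if_pos h1K, ent_cons_one]
    rfl
  rw [hb1]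
  rw [show ((([]:List ℤ).map (fun q => subSign (1::c::M₃) (1 :: J.map (fun j => j+1)) 1 * q)) = ([]:List ℤ)) from rfl,
    List.nil_append]
  unfold MI
  rw [List.map_flatten, List.map_map]
  rw [show ((c+1)::M₃ : List ℕ).length = (c::M₃ : List ℕ).length from rfl]
  apply congrArg
  apply List.map_congr_left
  intro idx _
  have hsub : subSign (1::c::M₃) (1 :: J.map (fun j => j+1)) (idx+2)
      = - subSign ((c+1)::M₃) J (idx+1) := by
    rw [subSign_cons_one _ _ _ (by omega), ent_cons_one, pow_one,
      subSign_map_succ 1 (c::M₃) J hJ1 (idx+1)]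
    rw [subSign_ent_congr (c::M₃) ((c+1)::M₃) J (idx+1) (by
      intro j hj
      obtain ⟨j', rfl⟩ : ∃ j', j = j' + 2 := ⟨j - 2, by have := hJ j hj; omega⟩
      rw [ent_cons_succ, ent_cons_succ])]
    ring
  have hblk : block (1::c::M₃) (1 :: J.map (fun j => j+1)) (idx+2)
      = block ((c+1)::M₃) J (idx+1) := by
    unfold block
    rcases idx with _ | i
    · -- idx = 0 : position 2 on the left, 1 on the right
      have h2 : ((2:ℕ) ∈ (1 :: J.map (fun j => j+1))) ↔ 1 ∈ J := hmemK 0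
      have h1J : (1:ℕ) ∉ J := fun h => by have := hJ 1 h; omega
      rw [if_neg (fun h => h1J (h2.mp h)), if_neg h1J]
      have h3 : ((3:ℕ) ∈ (1 :: J.map (fun j => j+1))) ↔ 2 ∈ J := hmemK 1
      have h0J : (0:ℕ) ∉ J := fun h => by have := hJ 0 h; omega
      simp only [show (2:ℕ)-1 = 1 from rfl, show (2:ℕ)+1 = 3 from rfl,
        show (1:ℕ)-1 = 0 from rfl, show (1:ℕ)+1 = 2 from rfl,
        if_pos h1K, if_neg h0J, h3, ent_cons_succ]
      rw [ent_cons_one, ent_cons_one]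
      push_cast
      ring_nf
    · -- idx = i+1 : position i+3 left, i+2 right
      simp only [show i+1+2 = i+3 from rfl, show i+3-1 = i+2 from rfl,
        show i+3+1 = i+4 from rfl, show i+1+1 = i+2 from rfl, show i+2-1 = i+1 from rfl,
        show i+2+1 = i+3 from rfl, hmemK (i+1), hmemK i, hmemK (i+2),
        ent_cons_succ]
  rw [hblk, hsub]
  simp only [Function.comp_apply]
  rw [List.map_map]
  apply List.map_congr_left
  intro a _
  simp

theorem getLastD_tail (m : ℕ) (M' : List ℕ) (h : M' ≠ []) (hl : 2 ≤ (m::M').getLastD 0) :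
    2 ≤ M'.getLastD 0 := by
  rw [List.getLastD_cons] at hl
  have hg : M'.getLast? = some (M'.getLast h) := List.getLast?_eq_getLast h
  rw [List.getLastD_eq_getLast?] at hl ⊢
  rw [hg] at hl ⊢
  simpa using hl

theorem allow_single (m : ℕ) (hm : 2 ≤ m) : IsAllowable [m] [] := by
  refine ⟨List.isChain_nil, by simp, ?_⟩
  intro i h1 h2 he
  simp at h2
  have hi : i = 1 := by omega
  subst hi
  rw [ent_cons_one] at he
  omega

theorem allow_single_one : IsAllowable [1] [1] := by
  refine ⟨List.isChain_singleton _, by simp, ?_⟩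
  intro i h1 h2 he
  right; left
  simp at h2
  have : i = 1 := by omega
  subst this
  exact List.mem_cons_self

theorem allow_shift (m : ℕ) (M₀ K : List ℕ) (hK : IsAllowable M₀ K) (hm : m = 1 → 1 ∈ K) :
    IsAllowable (m::M₀) (K.map (fun j => j+1)) := by
  obtain ⟨hc, hb, ho⟩ := hK
  refine ⟨?_, ?_, ?_⟩
  · show List.IsChain _ _
    rw [List.isChain_map]
    exact List.IsChain.imp (fun a b h => by omega) hc
  · intro i hi
    rcases List.mem_map.mp hi with ⟨j, hj, rfl⟩
    have := hb j hj
    simp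
    omega
  · intro i h1 h2 he
    obtain ⟨j, rfl⟩ : ∃ j, i = j + 1 := ⟨i - 1, by omega⟩
    rcases Nat.eq_zero_or_pos j with rfl | hj
    · -- i = 1
      right; right
      rw [ent_cons_one] at he
      exact (mem_map_succ K 1).mpr (hm he)
    · -- i = j'+2
      obtain ⟨j', rfl⟩ : ∃ j', j = j' + 1 := ⟨j - 1, by omega⟩
      have he' : ent M₀ (j'+1) = 1 := by
        rw [ent_cons_succ] at he
        exact he
      have hlen : j' + 1 ≤ M₀.length := by
        simp at h2; omega
      rcases ho (j'+1) (by omega) hlen he' with h | h | h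
      · left
        rw [show j'+1-1 = j' from rfl] at h
        rw [show j'+1+1-1 = j'+1 from rfl]
        rcases Nat.eq_zero_or_pos j' with rfl | hj'
        · exact absurd (hb 0 h).1 (by omega)
        · obtain ⟨j'', rfl⟩ : ∃ j'', j' = j'' + 1 := ⟨j' - 1, by omega⟩
          exact (mem_map_succ K (j''+1)).mpr h
      · right; left
        exact (mem_map_succ K (j'+1)).mpr h
      · right; right
        exact (mem_map_succ K (j'+2)).mpr h

theorem allow_retuple (x y : ℕ) (Mt K₀ : List ℕ) (h : IsAllowable (x::Mt) (1::K₀)) :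
    IsAllowable (y::Mt) (1::K₀) := by
  obtain ⟨hc, hb, ho⟩ := h
  refine ⟨hc, by simpa using hb, ?_⟩
  intro i h1 h2 he
  obtain ⟨j, rfl⟩ : ∃ j, i = j + 1 := ⟨i - 1, by omega⟩
  rcases Nat.eq_zero_or_pos j with rfl | hj
  · right; left; exact List.mem_cons_self
  · obtain ⟨j', rfl⟩ : ∃ j', j = j' + 1 := ⟨j - 1, by omega⟩
    have he' : ent (x::Mt) (j'+2) = 1 := by
      rw [ent_cons_succ] at he ⊢
      exact he
    exact ho (j'+2) (by omega) (by simpa using h2) he'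

theorem allow_collapse (c : ℕ) (M₃ J : List ℕ) (hJ : IsAllowable ((c+1)::M₃) J)
    (hJ1 : 1 ∉ J) : IsAllowable (1::c::M₃) (1 :: J.map (fun j => j+1)) := by
  obtain ⟨hc, hb, ho⟩ := hJ
  have hJ2 : ∀ j ∈ J, 2 ≤ j := by
    intro j hj
    have h1 := (hb j hj).1
    rcases Nat.lt_or_ge j 2 with h | h
    · have : j = 1 := by omega
      subst this
      exact absurd hj hJ1
    · exact h
  refine ⟨?_, ?_, ?_⟩
  · show List.IsChain _ _
    rw [List.isChain_cons]
    constructor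
    · intro y hy
      have hy' : y ∈ J.map (fun j => j+1) := List.mem_of_mem_head? hy
      rcases List.mem_map.mp hy' with ⟨j, hj, rfl⟩
      have := hJ2 j hj
      omega
    · rw [List.isChain_map]
      exact List.IsChain.imp (fun a b h => by omega) hc
  · intro i hi
    rcases List.mem_cons.mp hi with rfl | hi'
    · simp
    · rcases List.mem_map.mp hi' with ⟨j, hj, rfl⟩
      have := hb j hj
      simp at this ⊢
      omega
  · intro i h1 h2 he
    obtain ⟨j, rfl⟩ : ∃ j, i = j + 1 := ⟨i - 1, by omega⟩
    rcases Nat.lt_or_ge j 2 with hj2 | hj2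
    · have : j = 0 ∨ j = 1 := by omega
      rcases this with rfl | rfl
      · right; left; exact List.mem_cons_self
      · left; exact List.mem_cons_self
    · obtain ⟨j', rfl⟩ : ∃ j', j = j' + 2 := ⟨j - 2, by omega⟩
      have he' : ent ((c+1)::M₃) (j'+2) = 1 := by
        rw [show ((j'+2)+1) = (j'+1)+2 from rfl, ent_cons_succ, ent_cons_succ] at he
        rw [ent_cons_succ]
        exact he
      have hlen : j'+2 ≤ ((c+1)::M₃ : List ℕ).length := by
        simp at h2 ⊢; omega
      rcases ho (j'+2) (by omega) hlen he' with h | h | h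
      · left
        rw [show j'+2-1 = j'+1 from rfl] at h
        rw [show j'+2+1-1 = j'+1+1 from rfl]
        exact List.mem_cons_of_mem _ ((mem_map_succ J (j'+1)).mpr h)
      · right; left
        exact List.mem_cons_of_mem _ ((mem_map_succ J (j'+2)).mpr h)
      · right; right
        exact List.mem_cons_of_mem _ ((mem_map_succ J (j'+3)).mpr h)

theorem MI_single (m : ℕ) : MI [m] [] = [(m:ℤ)] := by
  rw [MI_expand]
  unfold block
  simp [subSign, ent_cons_one]

theorem MI_single_one : MI [1] [1] = [] := by
  rw [MI_expand]
  unfold block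
  simp [subSign, ent_cons_one]
  rfl

theorem cf_bounds_ge (M : List ℕ) (hpos : ∀ m ∈ M, 0 < m) (hlast : M ≠ [] → 2 ≤ M.getLastD 0) :
    0 ≤ cf (M.map Nat.cast) ∧ cf (M.map Nat.cast) < 1 := by
  rcases eq_or_ne M ([] : List ℕ) with rfl | h
  · simp [cf]
  · have := cf_M_bounds M h hpos (hlast h)
    exact ⟨le_of_lt this.1, this.2⟩

theorem getLastD_cons_eq (x : ℕ) (M₃ : List ℕ) (h : M₃ ≠ []) :
    (x::M₃).getLastD 0 = M₃.getLastD 0 := by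
  rw [List.getLastD_cons]
  have hg : M₃.getLast? = some (M₃.getLast h) := List.getLast?_eq_getLast h
  rw [List.getLastD_eq_getLast?, List.getLastD_eq_getLast?, hg]
  simp

theorem map_neg_cast (P : List ℤ) :
    ((P.map (fun x => -x)).map (Int.cast : ℤ → ℚ)) = (P.map Int.cast).map (fun q => -q) := by
  rw [List.map_map, List.map_map]
  apply List.map_congr_left
  intro a _
  simp

theorem inner_lemma (n : ℕ)
    (ih : ∀ (N : List ℤ) (M : List ℕ), N.length ≤ n → (∀ m ∈ M, 0 < m) →
      2 ≤ M.getLastD 0 → (∀ q ∈ N, 2 ≤ |q|) →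
      cf (N.map Int.cast) = cf (M.map Nat.cast) →
      ∃ I, IsAllowable M I ∧ 1 ∉ I ∧ N = MI M I) :
    ∀ (a : ℕ) (Mt : List ℕ) (P : List ℤ), 1 ≤ a → (∀ m ∈ Mt, 0 < m) →
      (Mt ≠ [] → 2 ≤ Mt.getLastD 0) → (∀ q ∈ P, 2 ≤ |q|) → P.length ≤ n →
      cf (P.map Int.cast) = cf ((a::Mt).map Nat.cast) - 1 →
      ∃ K₀, (∀ j ∈ K₀, 3 ≤ j) ∧ IsAllowable (a::Mt) (1::K₀) ∧ P = MI (a::Mt) (1::K₀) := by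
  intro a
  induction a with
  | zero => intro Mt P h; omega
  | succ b ihb =>
    intro Mt P _ hposMt hlastMt hP hlen hval
    rcases Nat.eq_zero_or_pos b with rfl | hb
    · -- a = 1
      rcases eq_or_ne Mt ([] : List ℕ) with rfl | hMt
      · -- Mt = [] : value is 1, so cf P = 0 and P = []
        have hz : cf (P.map Int.cast) = 0 := by
          rw [hval, List.map_cons, List.map_nil, cf_cons, cf_nil]
          norm_num
        have hPnil : P = [] := by
          cases P with
          | nil => rfl
          | cons p P' => exact absurd hz (cf_cons_ne p P' hP)
        subst hPnil
        exact ⟨[], by simp, allow_single_one, MI_single_one.symm⟩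
      · -- Mt = c :: M₃
        cases Mt with
        | nil => exact absurd rfl hMt
        | cons c M₃ =>
          have hc1 : 1 ≤ c := hposMt c (List.mem_cons_self)
          set t := cf (M₃.map Nat.cast) with ht
          have htb : 0 ≤ t ∧ t < 1 := by
            apply cf_bounds_ge M₃ (fun q hq => hposMt q (List.mem_cons_of_mem _ hq))
            intro h3
            exact getLastD_tail c M₃ h3 (hlastMt (by simp))
          have hcq : (1:ℚ) ≤ (c:ℚ) := by exact_mod_cast hc1
          have hD : (0:ℚ) < (c:ℚ) + t := by linarith [htb.1]
          have hD1 : (0:ℚ) < (c:ℚ) + 1 + t := by linarith [htb.1]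
          have hval1 : cf ((((1:ℕ)::c::M₃)).map Nat.cast) = 1/(1 + 1/((c:ℚ) + t)) := by
            rw [List.map_cons, List.map_cons, cf_cons, cf_cons, ← ht]
            norm_num
          have hnewval : cf ((((c+1:ℕ))::M₃).map Nat.cast) = 1/((c:ℚ) + 1 + t) := by
            rw [List.map_cons, cf_cons, ← ht]
            push_cast
            ring_nf
          have hPneg : cf (((P.map (fun x => -x)).map Int.cast)) =
              cf ((((c+1:ℕ))::M₃).map Nat.cast) := by
            rw [map_neg_cast, cf_neg_map, hval, hval1, hnewval]
            have h1D : (0:ℚ) < 1 + 1/((c:ℚ)+t) := by positivity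
            field_simp
            ring
          obtain ⟨J, hJallow, hJ1, hJeq⟩ := ih (P.map (fun x => -x)) ((c+1)::M₃)
            (by rw [List.length_map]; exact hlen)
            (by intro m hm
                rcases List.mem_cons.mp hm with rfl | hm'
                · omega
                · exact hposMt m (List.mem_cons_of_mem _ hm'))
            (by rcases eq_or_ne M₃ ([] : List ℕ) with rfl | h3
                · simpa using by omega
                · rw [getLastD_cons_eq _ _ h3]
                  exact getLastD_tail c M₃ h3 (hlastMt (by simp)))
            (by intro q hq
                rcases List.mem_map.mp hq with ⟨q', hq', rfl⟩
                rw [abs_neg]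
                exact hP q' hq')
            hPneg
          have hJ2 : ∀ j ∈ J, 2 ≤ j := by
            intro j hj
            have h1 := (hJallow.2.1 j hj).1
            rcases Nat.lt_or_ge j 2 with h | h
            · have : j = 1 := by omega
              subst this
              exact absurd hj hJ1
            · exact h
          refine ⟨J.map (fun j => j+1), ?_, allow_collapse c M₃ J hJallow hJ1, ?_⟩
          · intro j hj
            rcases List.mem_map.mp hj with ⟨j', hj', rfl⟩
            have := hJ2 j' hj'
            omega
          · rw [MI_collapse c M₃ J hJ2, ← hJeq, List.map_map]
            have : ((fun x : ℤ => -x) ∘ (fun x : ℤ => -x)) = id := by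
              funext z; simp
            rw [this, List.map_id]
    · -- a = b'+2
      obtain ⟨b', rfl⟩ : ∃ b', b = b' + 1 := ⟨b - 1, by omega⟩
      set t := cf (Mt.map Nat.cast) with ht
      have htb : 0 ≤ t ∧ t < 1 := cf_bounds_ge Mt hposMt hlastMt
      set B : ℚ := (b':ℚ) + 2 + t with hB
      have hB2 : (2:ℚ) ≤ B := by
        have : (0:ℚ) ≤ (b':ℚ) := by positivity
        simp only [hB]; linarith [htb.1]
      have hvalB : cf (P.map Int.cast) = 1/B - 1 := by
        rw [hval, List.map_cons, cf_cons, ← ht]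
        have : ((b'+1+1 : ℕ):ℚ) = (b':ℚ) + 2 := by push_cast; ring
        rw [this]
      have hvneg : cf (P.map Int.cast) < 0 := by
        rw [hvalB]
        have : 1/B < 1 := by rw [div_lt_one (by linarith)]; linarith
        linarith
      cases P with
      | nil => simp [cf] at hvneg
      | cons p1 P₂ =>
        have hp1 : 2 ≤ |p1| := hP p1 (List.mem_cons_self)
        have hP₂ : ∀ q ∈ P₂, 2 ≤ |q| := fun q hq => hP q (List.mem_cons_of_mem _ hq)
        have hr₂ : |cf (P₂.map Int.cast)| < 1 := cf_abs_lt P₂ hP₂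
        set r₂ := cf (P₂.map Int.cast) with hr₂def
        have hden : (p1:ℚ) + r₂ ≠ 0 := cf_denom_ne p1 hp1 r₂ hr₂
        have hEq : 1/((p1:ℚ) + r₂) = 1/B - 1 := by
          rw [← hvalB, List.map_cons, cf_cons, ← hr₂def]
        -- s := p1 + r₂ = 1/(1/B - 1) = -B/(B-1)
        have hsval : (p1:ℚ) + r₂ = -B/(B-1) := by
          have hBne : B ≠ 0 := by linarith
          have hBm1 : B - 1 ≠ 0 := by linarith
          have hv : 1/B - 1 ≠ 0 := by
            intro h
            have : 1/B = 1 := by linarith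
            rw [div_eq_one_iff_eq hBne] at this
            linarith
          field_simp at hEq ⊢
          nlinarith [hEq]
        have hr₂' : -1 < r₂ ∧ r₂ < 1 := abs_lt.mp hr₂
        have hs2 : -2 ≤ (p1:ℚ) + r₂ := by
          rw [hsval]
          rw [le_div_iff₀ (by linarith : (0:ℚ) < B - 1)]
          nlinarith
        have hs1 : (p1:ℚ) + r₂ < -1 := by
          rw [hsval]
          rw [div_lt_iff₀ (by linarith : (0:ℚ) < B - 1)]
          nlinarith
        have hp1v : p1 = -2 := by
          have h1 : (p1:ℚ) < 0 := by linarith [hr₂'.1, hr₂'.2]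
          have h2 : (-3:ℚ) < (p1:ℚ) := by linarith [hr₂'.1, hr₂'.2]
          have h1' : p1 < 0 := by exact_mod_cast h1
          have h2' : -3 < p1 := by exact_mod_cast h2
          rcases abs_cases p1 with ⟨he, _⟩ | ⟨he, _⟩
          · rw [he] at hp1; omega
          · rw [he] at hp1; omega
        subst hp1v
        have hr₂val : cf ((P₂.map (fun x => -x)).map Int.cast)
            = cf (((b'+1)::Mt).map Nat.cast) - 1 := by
          rw [map_neg_cast, cf_neg_map, List.map_cons, cf_cons, ← ht]
          have hc : ((b'+1 : ℕ):ℚ) = (b':ℚ) + 1 := by push_cast; ring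
          rw [hc, ← hr₂def]
          have hB1 : (b':ℚ) + 1 + t = B - 1 := by simp only [hB]; ring
          rw [hB1]
          have hp1q : ((-2:ℤ):ℚ) = -2 := by norm_num
          rw [hp1q] at hsval
          have hBm1 : (0:ℚ) < B - 1 := by linarith
          rw [neg_div] at hsval
          have key : B/(B-1) - 1/(B-1) = 1 := by
            rw [div_sub_div_same, div_self (ne_of_gt hBm1)]
          linarith [hsval, key]
        obtain ⟨K₀, hK3, hallow', heq'⟩ := ihb Mt (P₂.map (fun x => -x)) (by omega) hposMt hlastMt
          (by intro q hq
              rcases List.mem_map.mp hq with ⟨q', hq', rfl⟩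
              rw [abs_neg]; exact hP₂ q' hq')
          (by rw [List.length_map]
              simp at hlen
              omega)
          hr₂val
        refine ⟨K₀, hK3, allow_retuple (b'+1) (b'+1+1) Mt K₀ hallow', ?_⟩
        rw [show b'+1+1 = b'+2 from rfl, MI_peel b' Mt K₀ hK3, ← heq', List.map_map]
        have : ((fun x : ℤ => -x) ∘ (fun x : ℤ => -x)) = id := by
          funext z; simp
        rw [this, List.map_id]

theorem main_aux : ∀ n : ℕ, ∀ (N : List ℤ) (M : List ℕ), N.length ≤ n →
    (∀ m ∈ M, 0 < m) → 2 ≤ M.getLastD 0 → (∀ q ∈ N, 2 ≤ |q|) →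
    cf (N.map Int.cast) = cf (M.map Nat.cast) →
    ∃ I, IsAllowable M I ∧ 1 ∉ I ∧ N = MI M I := by
  intro n
  induction n with
  | zero =>
    intro N M hlen hpos hlast hN hcf
    exfalso
    have hNnil : N = [] := List.length_eq_zero_iff.mp (by omega)
    subst hNnil
    have hMne : M ≠ [] := by rintro rfl; simp at hlast
    have hb := cf_M_bounds M hMne hpos hlast
    rw [show (([]:List ℤ).map Int.cast) = [] from rfl, cf_nil] at hcf
    linarith [hb.1, hcf.symm]
  | succ n ihn =>
    intro N M hlen hpos hlast hN hcf
    have hMne : M ≠ [] := by rintro rfl; simp at hlast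
    cases M with
    | nil => exact absurd rfl hMne
    | cons m1 M' =>
      have hMb := cf_M_bounds (m1::M') (by simp) hpos hlast
      cases N with
      | nil =>
        exfalso
        rw [show (([]:List ℤ).map Int.cast) = [] from rfl, cf_nil] at hcf
        linarith [hMb.1, hcf.symm]
      | cons n1 N' =>
        have hn1 : 2 ≤ |n1| := hN n1 (List.mem_cons_self)
        have hN' : ∀ q ∈ N', 2 ≤ |q| := fun q hq => hN q (List.mem_cons_of_mem _ hq)
        have hr : |cf (N'.map Int.cast)| < 1 := cf_abs_lt N' hN'
        set r := cf (N'.map Int.cast) with hrdef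
        have hrr := abs_lt.mp hr
        set t := cf (M'.map Nat.cast) with htdef
        have hposM' : ∀ q ∈ M', 0 < q := fun q hq => hpos q (List.mem_cons_of_mem _ hq)
        have htb : 0 ≤ t ∧ t < 1 :=
          cf_bounds_ge M' hposM' (fun h => getLastD_tail m1 M' h hlast)
        have hm1 : 1 ≤ m1 := hpos m1 (List.mem_cons_self)
        have hm1q : (1:ℚ) ≤ (m1:ℚ) := by exact_mod_cast hm1
        have hcf' : 1/((n1:ℚ) + r) = 1/((m1:ℚ) + t) := by
          rw [List.map_cons, List.map_cons, cf_cons, cf_cons, ← hrdef, ← htdef] at hcf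
          exact hcf
        have hdenN : (n1:ℚ) + r ≠ 0 := cf_denom_ne n1 hn1 r hr
        have hdenM : (0:ℚ) < (m1:ℚ) + t := by linarith [htb.1]
        have hsum : (n1:ℚ) + r = (m1:ℚ) + t := by
          have h1 : ((n1:ℚ) + r)⁻¹ = ((m1:ℚ) + t)⁻¹ := by
            rw [← one_div, ← one_div]; exact hcf'
          exact inv_injective h1
        have hd : n1 = (m1:ℤ) ∨ n1 = (m1:ℤ) + 1 := by
          have h1 : ((n1 - m1 : ℤ):ℚ) = t - r := by push_cast; linarith [hsum]
          have h2 : (-1:ℚ) < ((n1 - m1:ℤ):ℚ) := by rw [h1]; linarith [htb.1, hrr.2]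
          have h3 : ((n1 - m1:ℤ):ℚ) < 2 := by rw [h1]; linarith [htb.2, hrr.1]
          have h2' : (-1:ℤ) < n1 - m1 := by exact_mod_cast h2
          have h3' : (n1 - m1:ℤ) < 2 := by exact_mod_cast h3
          omega
        rcases hd with hd | hd
        · -- case A : n1 = m1
          have hrt : r = t := by
            have he : (n1:ℚ) = (m1:ℚ) := by exact_mod_cast hd
            linarith [hsum]
          rcases eq_or_ne M' ([] : List ℕ) with rfl | hM'ne
          · have ht0 : t = 0 := by rw [htdef]; rfl
            have hN'nil : N' = [] := by
              cases N' with
              | nil => rfl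
              | cons q Q =>
                exact absurd (by rw [← hrdef, hrt, ht0] : cf ((q::Q).map Int.cast) = 0)
                  (cf_cons_ne q Q hN')
            subst hN'nil
            have hm2 : 2 ≤ m1 := by simpa using hlast
            refine ⟨[], allow_single m1 hm2, by simp, ?_⟩
            rw [MI_single]
            rw [hd]
          · have hlast' := getLastD_tail m1 M' hM'ne hlast
            have hcfN' : cf (N'.map Int.cast) = cf (M'.map Nat.cast) := by
              rw [← hrdef, ← htdef, hrt]
            obtain ⟨K, hKallow, hK1, hKeq⟩ := ihn N' M' (by simp at hlen; omega)
              hposM' hlast' hN' hcfN'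
            have hKb : ∀ j ∈ K, 1 ≤ j := fun j hj => (hKallow.2.1 j hj).1
            have hm1ne : m1 ≠ 1 := by
              intro h
              rw [h] at hd
              rw [hd] at hn1
              norm_num at hn1
            refine ⟨K.map (fun j => j+1),
              allow_shift m1 M' K hKallow (fun h => absurd h hm1ne),
              not_mem_map_succ_one K hKb, ?_⟩
            rw [MI_cons_shift m1 M' K hKb, if_neg hK1, ← hKeq, add_zero]
            rw [hd]
        · -- case B : n1 = m1 + 1
          have hrt : r = t - 1 := by
            have he : (n1:ℚ) = (m1:ℚ) + 1 := by exact_mod_cast hd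
            linarith [hsum]
          have htpos : 0 < t := by linarith [hrr.1]
          have hM'ne : M' ≠ [] := by
            rintro rfl
            have : t = 0 := by rw [htdef]; rfl
            linarith
          cases M' with
          | nil => exact absurd rfl hM'ne
          | cons m2 M'' =>
            have hval' : cf (N'.map Int.cast) = cf ((m2::M'').map Nat.cast) - 1 := by
              rw [← hrdef, hrt, htdef]
            obtain ⟨K₀, hK3, hallow', heq'⟩ := inner_lemma n ihn m2 M'' N'
              (hpos m2 (List.mem_cons_of_mem _ (List.mem_cons_self)))
              (fun q hq => hpos q (List.mem_cons_of_mem _ (List.mem_cons_of_mem _ hq)))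
              (fun h => getLastD_tail m2 M'' h (getLastD_tail m1 (m2::M'') (by simp) hlast))
              hN' (by simp at hlen; omega) hval'
            have hKb : ∀ j ∈ (1::K₀ : List ℕ), 1 ≤ j := fun j hj => (hallow'.2.1 j hj).1
            refine ⟨(1::K₀).map (fun j => j+1),
              allow_shift m1 (m2::M'') (1::K₀) hallow' (fun _ => List.mem_cons_self),
              not_mem_map_succ_one _ hKb, ?_⟩
            rw [MI_cons_shift m1 (m2::M'') (1::K₀) hKb,
              if_pos (List.mem_cons_self), ← heq']
            have : (n1:ℤ) = (m1:ℤ) + 1 := hd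
            rw [this]


/-- Any continued fraction expansion `N` of the value of `M` all of whose
entries have absolute value `≥ 2` arises as `M_I` for some allowable
sub-tuple `I` for `M`. -/
theorem exists_allowable_of_cf_eq (M : List ℕ) (hpos : ∀ m ∈ M, 0 < m)
    (hlast : 2 ≤ M.getLastD 0) (N : List ℤ) (hN : ∀ q ∈ N, 2 ≤ |q|)
    (hcf : cf (N.map (fun n => (n : ℚ))) = cf (M.map (fun m => (m : ℚ)))) :
    ∃ I : List ℕ, IsAllowable M I ∧ N = MI M I := by
  rw [castList_eqZ, castList_eqN] at hcf
  obtain ⟨I, hI, _, hEq⟩ := main_aux N.length N M le_rfl hpos hlast hN hcf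
  exact ⟨I, hI, hEq⟩
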